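/- Let β > 0, Λ ⊂ ℤ finite, and for each x ∈ Λ let F_x, G_x ∈ L²(ℙ⋆_β) be cylinder functions; set φ := Σ_{x∈Λ} ( ∇_x F_x + ∇_{x,x+1} G_x ). Then: (i) Σ_{y∈ℤ} y · 𝔼⋆_β[ φ · ω_y² ] = 𝔼⋆_β[ (ω₀² − ω₁²) · Σ_{x∈Λ} τ_{−x} G_x ]; (ii) for every cylinder function g ∈ L²(ℙ⋆_β), Σ_{z∈ℤ} 𝔼⋆_β[ φ · τ_z g ] = 𝔼⋆_β[ ∇₀(Γ_g) · Σ_{x∈Λ} τ_{−x} F_x + ∇_{0,1}(Γ_g) · Σ_{x∈Λ} τ_{−x} G_x ]. (All sums over ℤ have finitely many nonzero terms.) -/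

import Mathlib

open MeasureTheory ProbabilityTheory Filter
open scoped NNReal ENNReal

noncomputable section

/-- Flip of the coordinate at site `x`. -/
def flipAt (x : ℤ) (ω : ℤ → ℝ) : ℤ → ℝ := Function.update ω x (-(ω x))

/-- Exchange of the coordinates at sites `x` and `x+1`. -/
def exchAt (x : ℤ) (ω : ℤ → ℝ) : ℤ → ℝ :=
  fun z => if z = x then ω (x + 1) else if z = x + 1 then ω x else ω z

/-- Translation by `x` of a function of the disorder and the configuration. -/
def tau (x : ℤ) (f : (ℤ → ℝ) → (ℤ → ℝ) → ℝ) : (ℤ → ℝ) → (ℤ → ℝ) → ℝ :=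
  fun m ω => f (fun z => m (x + z)) (fun z => ω (x + z))

/-- Antisymmetric (Hamiltonian) part `A^m` of the generator (the sum has finitely
many nonzero terms on cylinder functions). -/
def Agen (f : (ℤ → ℝ) → (ℤ → ℝ) → ℝ) : (ℤ → ℝ) → (ℤ → ℝ) → ℝ :=
  fun m ω => ∑' x : ℤ,
    (ω (x + 1) / Real.sqrt (m x * m (x + 1)) - ω (x - 1) / Real.sqrt (m (x - 1) * m x)) *
      deriv (fun t => f m (Function.update ω x t)) (ω x)

/-- Flip part of the noise. -/
def Sflip (f : (ℤ → ℝ) → (ℤ → ℝ) → ℝ) : (ℤ → ℝ) → (ℤ → ℝ) → ℝ :=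
  fun m ω => ∑' x : ℤ, (f m (flipAt x ω) - f m ω)

/-- Exchange part of the noise. -/
def Sexch (f : (ℤ → ℝ) → (ℤ → ℝ) → ℝ) : (ℤ → ℝ) → (ℤ → ℝ) → ℝ :=
  fun m ω => ∑' x : ℤ, (f m (exchAt x ω) - f m ω)

/-- Symmetric part `S = γ S^flipAt + λ S^exchAt` of the generator. -/
def Sgen (gam lam : ℝ) (f : (ℤ → ℝ) → (ℤ → ℝ) → ℝ) : (ℤ → ℝ) → (ℤ → ℝ) → ℝ :=
  fun m ω => gam * Sflip f m ω + lam * Sexch f m ω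

/-- The full generator `L^m = A^m + γ S^flipAt + λ S^exchAt`. -/
def Lgen (gam lam : ℝ) (f : (ℤ → ℝ) → (ℤ → ℝ) → ℝ) : (ℤ → ℝ) → (ℤ → ℝ) → ℝ :=
  fun m ω => Agen f m ω + Sgen gam lam f m ω

/-- `f` depends only on the coordinates (disorder and configuration) in `s`. -/
def CylOn (f : (ℤ → ℝ) → (ℤ → ℝ) → ℝ) (s : Finset ℤ) : Prop :=
  ∀ m ω m' ω', (∀ z ∈ s, m z = m' z) → (∀ z ∈ s, ω z = ω' z) → f m ω = f m' ω'

/-- The class `Q` of quadratic cylinder functions. -/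
structure Quad where
  ψ : ℤ → ℤ → (ℤ → ℝ) → ℝ
  symm : ∀ i j, ψ i j = ψ j i
  finsupp : {p : ℤ × ℤ | ψ p.1 p.2 ≠ 0}.Finite
  meas : ∀ i j, Measurable (ψ i j)
  bdd : ∀ i j, ∃ K : ℝ, ∀ m, |ψ i j m| ≤ K
  cyl : ∀ i j, ∃ s : Finset ℤ, ∀ m m', (∀ z ∈ s, m z = m' z) → ψ i j m = ψ i j m'

/-- Evaluation of an element of `Q`:
`f(m,ω) = Σ_i ψ_{i,i}(m)(ω_{i+1}² − ω_i²) + Σ_{i≠j} ψ_{i,j}(m) ω_i ω_j`. -/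
def Quad.eval (f : Quad) : (ℤ → ℝ) → (ℤ → ℝ) → ℝ :=
  fun m ω => ∑' p : ℤ × ℤ,
    if p.1 = p.2 then f.ψ p.1 p.1 m * (ω (p.1 + 1) ^ 2 - ω p.1 ^ 2)
    else f.ψ p.1 p.2 m * (ω p.1 * ω p.2)

/-- Expectation `𝔼⋆` with respect to `ℙ⋆ = P ⊗ μ`. -/
def Estar (P μ : Measure (ℤ → ℝ)) (f : (ℤ → ℝ) → (ℤ → ℝ) → ℝ) : ℝ :=
  ∫ p, f p.1 p.2 ∂(P.prod μ)

/-- `≪f, g≫_⋆ = Σ_{x∈ℤ} 𝔼⋆[f · τ_x g]`. -/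
def innerStar (P μ : Measure (ℤ → ℝ)) (f g : (ℤ → ℝ) → (ℤ → ℝ) → ℝ) : ℝ :=
  ∑' x : ℤ, Estar P μ (fun m ω => f m ω * tau x g m ω)

/-- `≪f≫_⋆⋆ = Σ_{x∈ℤ} x · 𝔼⋆[f · ω_x²]`. -/
def starstar (P μ : Measure (ℤ → ℝ)) (f : (ℤ → ℝ) → (ℤ → ℝ) → ℝ) : ℝ :=
  ∑' x : ℤ, (x : ℝ) * Estar P μ (fun m ω => f m ω * ω x ^ 2)

/-- `∇₀(Γ_g) = Σ_{x∈ℤ} ∇₀(τ_x g)`. -/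
def grad0Gamma (g : (ℤ → ℝ) → (ℤ → ℝ) → ℝ) : (ℤ → ℝ) → (ℤ → ℝ) → ℝ :=
  fun m ω => ∑' x : ℤ, (tau x g m (flipAt 0 ω) - tau x g m ω)

/-- `∇_{0,1}(Γ_g) = Σ_{x∈ℤ} ∇_{0,1}(τ_x g)`. -/
def grad01Gamma (g : (ℤ → ℝ) → (ℤ → ℝ) → ℝ) : (ℤ → ℝ) → (ℤ → ℝ) → ℝ :=
  fun m ω => ∑' x : ℤ, (tau x g m (exchAt 0 ω) - tau x g m ω)

/-- The seminorm `⦀φ⦀₁²`, defined through a variational formula. -/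
def norm1sq (P μ : Measure (ℤ → ℝ)) (gam lam : ℝ) (φ : (ℤ → ℝ) → (ℤ → ℝ) → ℝ) : ℝ :=
  sSup { v : ℝ | ∃ (g : Quad) (a : ℝ),
    v = 2 * innerStar P μ φ g.eval + 2 * a * starstar P μ φ
      - gam / 2 * Estar P μ (fun m ω => grad0Gamma g.eval m ω ^ 2)
      - lam / 2 * Estar P μ (fun m ω => (a * (ω 1 ^ 2 - ω 0 ^ 2) + grad01Gamma g.eval m ω) ^ 2) }

/-- The seminorm `⦀φ⦀₁`. -/
def norm1 (P μ : Measure (ℤ → ℝ)) (gam lam : ℝ) (φ : (ℤ → ℝ) → (ℤ → ℝ) → ℝ) : ℝ :=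
  Real.sqrt (norm1sq P μ gam lam φ)

/-- Antisymmetric part of the energy current: `j^A_{0,1}(m,ω) = 2ω₀ω₁/√(m₀m₁)`. -/
def jA : (ℤ → ℝ) → (ℤ → ℝ) → ℝ := fun m ω => 2 * ω 0 * ω 1 / Real.sqrt (m 0 * m 1)

/-- Symmetric part of the energy current: `j^S_{0,1}(ω) = λ(ω₁² − ω₀²)`. -/
def jS (lam : ℝ) : (ℤ → ℝ) → (ℤ → ℝ) → ℝ := fun _ ω => lam * (ω 1 ^ 2 - ω 0 ^ 2)

/-- The energy current `j_{0,1} = j^A_{0,1} + j^S_{0,1}`. -/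
def jcur (lam : ℝ) : (ℤ → ℝ) → (ℤ → ℝ) → ℝ := fun m ω => jA m ω + jS lam m ω

/-- `μ` is the i.i.d. product over `ℤ` of the one-site measure `κ`:
all finite-dimensional marginals of `μ` are finite products of `κ`. -/
def IsIIDProduct (μ : Measure (ℤ → ℝ)) (κ : Measure ℝ) : Prop :=
  ∀ s : Finset ℤ, μ.map (fun ω (i : s) => ω i.1) = Measure.pi (fun _ : s => κ)


namespace Stmt7Aux

/-- Precomposition with a permutation of `ℤ`, as a measurable equivalence. -/
def precompE (e : ℤ ≃ ℤ) : (ℤ → ℝ) ≃ᵐ (ℤ → ℝ) where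
  toEquiv :=
  { toFun := fun ω => ω ∘ e
    invFun := fun ω => ω ∘ e.symm
    left_inv := fun ω => by ext z; simp
    right_inv := fun ω => by ext z; simp }
  measurable_toFun := measurable_pi_lambda _ fun z => measurable_pi_apply _
  measurable_invFun := measurable_pi_lambda _ fun z => measurable_pi_apply _

@[simp] lemma precompE_apply (e : ℤ ≃ ℤ) (ω : ℤ → ℝ) (z : ℤ) :
    precompE e ω z = ω (e z) := rfl

def shiftE (x : ℤ) : ℤ ≃ ℤ where
  toFun z := x + z
  invFun z := -x + z
  left_inv z := neg_add_cancel_left x z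
  right_inv z := add_neg_cancel_left x z

@[simp] lemma shiftE_apply (x z : ℤ) : shiftE x z = x + z := rfl

def swapE (x : ℤ) : ℤ ≃ ℤ where
  toFun z := if z = x then x + 1 else if z = x + 1 then x else z
  invFun z := if z = x then x + 1 else if z = x + 1 then x else z
  left_inv z := by dsimp only; split_ifs <;> omega
  right_inv z := by dsimp only; split_ifs <;> omega

lemma flipAt_apply (x : ℤ) (ω : ℤ → ℝ) (z : ℤ) :
    flipAt x ω z = if z = x then -(ω x) else ω z := Function.update_apply ω x (-(ω x)) z

lemma flipAt_flipAt (x : ℤ) (ω : ℤ → ℝ) : flipAt x (flipAt x ω) = ω := by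
  funext z; by_cases h : z = x <;> simp [flipAt_apply, h]

lemma measurable_flipAt (x : ℤ) : Measurable (flipAt x) := by
  have h0 : flipAt x = fun ω z => if z = x then -(ω x) else ω z := by
    funext ω z; exact flipAt_apply x ω z
  rw [h0]
  refine measurable_pi_lambda _ fun z => ?_
  by_cases h : z = x
  · simp only [if_pos h]
    exact (measurable_pi_apply x).neg
  · simp only [if_neg h]
    exact measurable_pi_apply z

/-- flip as a measurable equivalence. -/
def flipE (x : ℤ) : (ℤ → ℝ) ≃ᵐ (ℤ → ℝ) where
  toEquiv :=
  { toFun := flipAt x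
    invFun := flipAt x
    left_inv := flipAt_flipAt x
    right_inv := flipAt_flipAt x }
  measurable_toFun := measurable_flipAt x
  measurable_invFun := measurable_flipAt x

@[simp] lemma flipE_apply (x : ℤ) (ω : ℤ → ℝ) : flipE x ω = flipAt x ω := rfl

lemma exchAt_eq (x : ℤ) : exchAt x = ⇑(precompE (swapE x)) := by
  funext ω z
  show _ = ω (swapE x z)
  simp only [exchAt, swapE, Equiv.coe_fn_mk]
  split_ifs <;> rfl

lemma measurable_restrict (s : Finset ℤ) :
    Measurable (fun (ω : ℤ → ℝ) (i : s) => ω i.1) :=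
  measurable_pi_lambda _ fun i => measurable_pi_apply _

lemma iid_unique {κ : Measure ℝ} {μ₁ μ₂ : Measure (ℤ → ℝ)}
    [IsProbabilityMeasure μ₁] [IsProbabilityMeasure μ₂]
    (h₁ : IsIIDProduct μ₁ κ) (h₂ : IsIIDProduct μ₂ κ) : μ₁ = μ₂ := by
  refine ext_of_generate_finite _ generateFrom_measurableCylinders.symm
    isPiSystem_measurableCylinders (fun t ht => ?_) (by simp)
  obtain ⟨s, S, hS, rfl⟩ := (mem_measurableCylinders _).mp ht
  have e1 : cylinder s S = (fun (ω : ℤ → ℝ) (i : s) => ω i.1) ⁻¹' S := rfl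
  rw [e1, ← Measure.map_apply (measurable_restrict s) hS,
    ← Measure.map_apply (measurable_restrict s) hS, h₁ s, h₂ s]

lemma iid_map_precomp {κ : Measure ℝ} [IsProbabilityMeasure κ] {μ : Measure (ℤ → ℝ)}
    (hμ : IsIIDProduct μ κ) (e : ℤ ≃ ℤ) : IsIIDProduct (μ.map (precompE e)) κ := by
  intro s
  classical
  rw [Measure.map_map (measurable_restrict s) (precompE e).measurable]
  set s' : Finset ℤ := s.image e with hs'
  let e' : {a // a ∈ s} ≃ {b // b ∈ s'} := e.subtypeEquiv (fun a => by
    simp only [hs', Finset.mem_image]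
    constructor
    · exact fun ha => ⟨a, ha, rfl⟩
    · rintro ⟨b, hb, hba⟩
      rwa [← e.injective hba])
  have key := measurePreserving_arrowCongr' (fun _ : {b // b ∈ s'} => κ)
    (fun _ : {a // a ∈ s} => κ) e'.symm (MeasurableEquiv.refl ℝ)
    (fun _ => MeasurePreserving.id κ)
  have comp_eq : ((fun (ω : ℤ → ℝ) (i : s) => ω i.1) ∘ ⇑(precompE e)) =
      ⇑(MeasurableEquiv.arrowCongr' e'.symm (MeasurableEquiv.refl ℝ)) ∘
        (fun (ω : ℤ → ℝ) (i : s') => ω i.1) := by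
    funext ω
    rfl
  rw [comp_eq, ← Measure.map_map (MeasurableEquiv.arrowCongr' e'.symm
    (MeasurableEquiv.refl ℝ)).measurable (measurable_restrict s'), hμ s', key.map_eq]

lemma iid_map_flip {κ : Measure ℝ} [IsProbabilityMeasure κ] {μ : Measure (ℤ → ℝ)}
    (hκ : κ.map (fun a => -a) = κ) (hμ : IsIIDProduct μ κ) (x : ℤ) :
    IsIIDProduct (μ.map (flipAt x)) κ := by
  intro s
  classical
  rw [Measure.map_map (measurable_restrict s) (measurable_flipAt x)]
  have comp_eq : ((fun (ω : ℤ → ℝ) (i : s) => ω i.1) ∘ flipAt x) =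
      (fun (v : s → ℝ) (i : s) => if i.1 = x then -(v i) else v i) ∘
        (fun (ω : ℤ → ℝ) (i : s) => ω i.1) := by
    funext ω
    funext i
    by_cases h : i.1 = x <;> simp [flipAt_apply, h]
  have hpw : MeasurePreserving (fun (v : s → ℝ) (i : s) => if i.1 = x then -(v i) else v i)
      (Measure.pi fun _ : s => κ) (Measure.pi fun _ : s => κ) := by
    have := measurePreserving_pi (fun _ : s => κ) (fun _ : s => κ)
      (f := fun (i : s) (t : ℝ) => if i.1 = x then -t else t) (fun i => by
        by_cases h : i.1 = x
        · simpa [h] using (MeasurePreserving.mk (μa := κ) (μb := κ) (f := fun t : ℝ => -t)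
            measurable_neg hκ)
        · simp only [h, ↓reduceIte]; exact MeasurePreserving.id κ)
    simpa using this
  rw [comp_eq, ← Measure.map_map hpw.measurable (measurable_restrict s), hμ s, hpw.map_eq]


lemma gauss_neg (v : ℝ≥0) : (gaussianReal 0 v).map (fun a => -a) = gaussianReal 0 v := by
  have h : (fun a : ℝ => -a) = ((-1 : ℝ) * ·) := by funext a; ring
  rw [h, gaussianReal_map_const_mul, mul_zero]
  congr 1
  have h1 : (NNReal.mk ((-1:ℝ)^2) (sq_nonneg _)) = 1 := by ext; norm_num
  rw [h1, one_mul]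

lemma estar_comp {P μ : Measure (ℤ → ℝ)} [IsProbabilityMeasure P] [IsProbabilityMeasure μ]
    (e₁ e₂ : (ℤ → ℝ) ≃ᵐ (ℤ → ℝ)) (h₁ : P.map e₁ = P) (h₂ : μ.map e₂ = μ)
    (f : (ℤ → ℝ) → (ℤ → ℝ) → ℝ) :
    Estar P μ (fun m ω => f (e₁ m) (e₂ ω)) = Estar P μ f := by
  have hmp : MeasurePreserving (⇑(e₁.prodCongr e₂)) (P.prod μ) (P.prod μ) :=
    MeasurePreserving.prod ⟨e₁.measurable, h₁⟩ ⟨e₂.measurable, h₂⟩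
  exact hmp.integral_comp (e₁.prodCongr e₂).measurableEmbedding (fun p => f p.1 p.2)

lemma memL2_comp {P μ : Measure (ℤ → ℝ)} [IsProbabilityMeasure P] [IsProbabilityMeasure μ]
    (e₁ e₂ : (ℤ → ℝ) ≃ᵐ (ℤ → ℝ)) (h₁ : P.map e₁ = P) (h₂ : μ.map e₂ = μ)
    {f : (ℤ → ℝ) → (ℤ → ℝ) → ℝ}
    (hf : MemLp (fun p : (ℤ → ℝ) × (ℤ → ℝ) => f p.1 p.2) 2 (P.prod μ)) :
    MemLp (fun p : (ℤ → ℝ) × (ℤ → ℝ) => f (e₁ p.1) (e₂ p.2)) 2 (P.prod μ) := by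
  have hmp : MeasurePreserving (⇑(e₁.prodCongr e₂)) (P.prod μ) (P.prod μ) :=
    MeasurePreserving.prod ⟨e₁.measurable, h₁⟩ ⟨e₂.measurable, h₂⟩
  exact hf.comp_measurePreserving hmp

lemma int_mul {α : Type*} [MeasurableSpace α] {μ : Measure α} {f g : α → ℝ}
    (hf : MemLp f 2 μ) (hg : MemLp g 2 μ) : Integrable (fun a => f a * g a) μ := by
  have hpqr : (1 : ℝ≥0∞) / 1 = 1 / 2 + 1 / 2 := by
    rw [ENNReal.div_add_div_same, one_add_one_eq_two, ENNReal.div_self two_ne_zero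
      ENNReal.ofNat_ne_top, div_one]
  have h := hg.smul (r := 1) hf (hpqr := ⟨by rw [inv_one, ENNReal.inv_two_add_inv_two]⟩)
  rw [← memLp_one_iff_integrable]
  have heq : (f • g) = fun a => f a * g a := rfl
  rwa [heq] at h

lemma gauss_moment (v : ℝ≥0) (hv : v ≠ 0) : MemLp (fun t : ℝ => t ^ 2) 2 (gaussianReal 0 v) := by
  have hmeas : AEStronglyMeasurable (fun t : ℝ => t ^ 2) (gaussianReal 0 v) :=
    (measurable_id.pow_const 2).aestronglyMeasurable
  rw [memLp_two_iff_integrable_sq hmeas]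
  have h4 : (fun t : ℝ => (t ^ 2) ^ 2) = fun t : ℝ => t ^ 4 := by funext t; ring
  rw [h4, gaussianReal_of_var_ne_zero _ hv,
    integrable_withDensity_iff (measurable_gaussianPDF _ _)
      (ae_of_all _ fun x => ENNReal.ofReal_lt_top)]
  have hvpos : (0 : ℝ) < (v : ℝ) := by
    have := hv
    positivity
  have hc : (0 : ℝ) < (2 * (v : ℝ))⁻¹ := by positivity
  have base0 := integrable_rpow_mul_exp_neg_mul_sq hc (by norm_num : (-1 : ℝ) < 4)
  have base0' : Integrable (fun x : ℝ => x ^ (4 : ℕ) * Real.exp (-(2 * (v : ℝ))⁻¹ * x ^ 2)) := by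
    refine base0.congr (ae_of_all _ fun x => ?_)
    have : x ^ (4 : ℝ) = x ^ (4 : ℕ) := by
      rw [show (4 : ℝ) = ((4 : ℕ) : ℝ) by norm_num, Real.rpow_natCast]
    show x ^ (4 : ℝ) * Real.exp (-(2 * (v : ℝ))⁻¹ * x ^ 2)
        = x ^ (4 : ℕ) * Real.exp (-(2 * (v : ℝ))⁻¹ * x ^ 2)
    rw [this]
  have base := base0'.const_mul (Real.sqrt (2 * Real.pi * v))⁻¹
  refine base.congr (ae_of_all _ fun x => ?_)
  have h2 : -(x - 0) ^ 2 / (2 * (v : ℝ)) = -(2 * (v : ℝ))⁻¹ * x ^ 2 := by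
    rw [sub_zero]
    field_simp
  show _ = x ^ 4 * (ENNReal.ofReal (gaussianPDFReal 0 v x)).toReal
  rw [ENNReal.toReal_ofReal (gaussianPDFReal_nonneg _ _ _), gaussianPDFReal, h2]
  ring


lemma coord_law {κ : Measure ℝ} [IsProbabilityMeasure κ] {μ : Measure (ℤ → ℝ)}
    (hμ : IsIIDProduct μ κ) (y : ℤ) :
    μ.map (fun ω => ω y) = κ := by
  ext s hs
  have hy : y ∈ ({y} : Finset ℤ) := Finset.mem_singleton_self y
  have hpre : (fun ω : ℤ → ℝ => ω y) ⁻¹' s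
      = (fun (ω : ℤ → ℝ) (i : ({y} : Finset ℤ)) => ω i.1) ⁻¹' (Set.pi Set.univ fun _ => s) := by
    ext ω
    simp only [Set.mem_preimage, Set.mem_pi, Set.mem_univ, forall_true_left]
    constructor
    · intro h i
      have hi : i = ⟨y, hy⟩ := Subtype.ext (Finset.mem_singleton.mp i.2)
      rw [hi]; exact h
    · intro h; exact h ⟨y, hy⟩
  rw [Measure.map_apply (measurable_pi_apply y) hs, hpre,
    ← Measure.map_apply (measurable_restrict ({y} : Finset ℤ))
      (MeasurableSet.univ_pi fun _ => hs), hμ {y}, Measure.pi_pi]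
  simp

lemma coord_sq_memL2 {P μ : Measure (ℤ → ℝ)} [IsProbabilityMeasure P] [IsProbabilityMeasure μ]
    {v : ℝ≥0} (hv : v ≠ 0) (hμ : IsIIDProduct μ (gaussianReal 0 v)) (y : ℤ) :
    MemLp (fun p : (ℤ → ℝ) × (ℤ → ℝ) => p.2 y ^ 2) 2 (P.prod μ) := by
  have hlaw : (P.prod μ).map (fun p : (ℤ → ℝ) × (ℤ → ℝ) => p.2 y) = gaussianReal 0 v := by
    have h0 : (fun p : (ℤ → ℝ) × (ℤ → ℝ) => p.2 y) = (fun ω : ℤ → ℝ => ω y) ∘ Prod.snd := rfl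
    rw [h0, ← Measure.map_map (measurable_pi_apply y) measurable_snd, Measure.map_snd_prod,
      measure_univ, one_smul, coord_law hμ y]
  have h1 : (fun p : (ℤ → ℝ) × (ℤ → ℝ) => p.2 y ^ 2)
      = (fun t : ℝ => t ^ 2) ∘ (fun p : (ℤ → ℝ) × (ℤ → ℝ) => p.2 y) := rfl
  rw [h1]
  have hmg := gauss_moment v hv
  rw [← hlaw] at hmg
  exact (memLp_map_measure_iff ((measurable_id.pow_const 2).aestronglyMeasurable)
    (((measurable_pi_apply y).comp measurable_snd).aemeasurable)).mp hmg

lemma map_flip_eq {κ : Measure ℝ} [IsProbabilityMeasure κ] {μ : Measure (ℤ → ℝ)}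
    [IsProbabilityMeasure μ] (hκ : κ.map (fun a => -a) = κ) (hμ : IsIIDProduct μ κ) (x : ℤ) :
    μ.map (flipAt x) = μ := by
  haveI := Measure.isProbabilityMeasure_map (μ := μ) (measurable_flipAt x).aemeasurable
  exact iid_unique (iid_map_flip hκ hμ x) hμ

lemma map_precomp_eq {κ : Measure ℝ} [IsProbabilityMeasure κ] {μ : Measure (ℤ → ℝ)}
    [IsProbabilityMeasure μ] (hμ : IsIIDProduct μ κ) (e : ℤ ≃ ℤ) :
    μ.map (precompE e) = μ := by
  haveI := Measure.isProbabilityMeasure_map (μ := μ) (precompE e).measurable.aemeasurable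
  exact iid_unique (iid_map_precomp hμ e) hμ


lemma estar_neg (P μ : Measure (ℤ → ℝ)) (f : (ℤ → ℝ) → (ℤ → ℝ) → ℝ) :
    Estar P μ (fun m ω => -(f m ω)) = - Estar P μ f := integral_neg _

lemma estar_sub {P μ : Measure (ℤ → ℝ)} {f g : (ℤ → ℝ) → (ℤ → ℝ) → ℝ}
    (hf : Integrable (fun p : (ℤ → ℝ) × (ℤ → ℝ) => f p.1 p.2) (P.prod μ))
    (hg : Integrable (fun p : (ℤ → ℝ) × (ℤ → ℝ) => g p.1 p.2) (P.prod μ)) :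
    Estar P μ (fun m ω => f m ω - g m ω) = Estar P μ f - Estar P μ g := integral_sub hf hg

lemma estar_add {P μ : Measure (ℤ → ℝ)} {f g : (ℤ → ℝ) → (ℤ → ℝ) → ℝ}
    (hf : Integrable (fun p : (ℤ → ℝ) × (ℤ → ℝ) => f p.1 p.2) (P.prod μ))
    (hg : Integrable (fun p : (ℤ → ℝ) × (ℤ → ℝ) => g p.1 p.2) (P.prod μ)) :
    Estar P μ (fun m ω => f m ω + g m ω) = Estar P μ f + Estar P μ g := integral_add hf hg

lemma estar_sum {P μ : Measure (ℤ → ℝ)} {ι : Type*} (s : Finset ι)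
    (f : ι → (ℤ → ℝ) → (ℤ → ℝ) → ℝ)
    (h : ∀ i ∈ s, Integrable (fun p : (ℤ → ℝ) × (ℤ → ℝ) => f i p.1 p.2) (P.prod μ)) :
    Estar P μ (fun m ω => ∑ i ∈ s, f i m ω) = ∑ i ∈ s, Estar P μ (f i) :=
  integral_finset_sum s h

lemma estar_zero (P μ : Measure (ℤ → ℝ)) :
    Estar P μ (fun _ _ => (0:ℝ)) = 0 := integral_zero _ _

lemma exchAt_exchAt (x : ℤ) (ω : ℤ → ℝ) : exchAt x (exchAt x ω) = ω := by
  rw [exchAt_eq]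
  funext z
  show ω (swapE x (swapE x z)) = ω z
  rw [show (swapE x) ((swapE x) z) = z from (swapE x).left_inv z]

lemma exchAt_self (x : ℤ) (ω : ℤ → ℝ) : exchAt x ω x = ω (x + 1) := by
  simp [exchAt]

lemma exchAt_succ (x : ℤ) (ω : ℤ → ℝ) : exchAt x ω (x + 1) = ω x := by
  have h : x + 1 ≠ x := by omega
  simp [exchAt, h]

lemma exchAt_other (x : ℤ) (ω : ℤ → ℝ) (z : ℤ) (h1 : z ≠ x) (h2 : z ≠ x + 1) :
    exchAt x ω z = ω z := by
  simp [exchAt, h1, h2]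

end Stmt7Aux

open Stmt7Aux

/-- explicit formulas for `≪φ≫_⋆⋆` and `≪φ, g≫_⋆` when
`φ = Σ_{x∈Λ} (∇_x F_x + ∇_{x,x+1} G_x)`. -/
theorem stmt7 (gam lam : ℝ) (hgam : 0 < gam) (hlam : 0 < lam)
    (C : ℝ) (hC : 1 < C)
    (ν : Measure ℝ) [IsProbabilityMeasure ν] (hν : ν (Set.Icc C⁻¹ C)ᶜ = 0)
    (P : Measure (ℤ → ℝ)) [IsProbabilityMeasure P] (hP : IsIIDProduct P ν)
    (β : ℝ) (hβ : 0 < β)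
    (μ : Measure (ℤ → ℝ)) [IsProbabilityMeasure μ]
    (hμ : IsIIDProduct μ (gaussianReal 0 (Real.toNNReal β⁻¹)))
    (Λ : Finset ℤ)
    (F G : ℤ → (ℤ → ℝ) → (ℤ → ℝ) → ℝ)
    (hF2 : ∀ x ∈ Λ, MemLp (fun p : (ℤ → ℝ) × (ℤ → ℝ) => F x p.1 p.2) 2 (P.prod μ))
    (hG2 : ∀ x ∈ Λ, MemLp (fun p : (ℤ → ℝ) × (ℤ → ℝ) => G x p.1 p.2) 2 (P.prod μ))
    (hFcyl : ∀ x ∈ Λ, ∃ t : Finset ℤ, CylOn (F x) t)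
    (hGcyl : ∀ x ∈ Λ, ∃ t : Finset ℤ, CylOn (G x) t)
    (φ : (ℤ → ℝ) → (ℤ → ℝ) → ℝ)
    (hφ : φ = fun m ω => ∑ x ∈ Λ,
      ((F x m (flipAt x ω) - F x m ω) + (G x m (exchAt x ω) - G x m ω))) :
    (∑' y : ℤ, (y : ℝ) * Estar P μ (fun m ω => φ m ω * ω y ^ 2)
        = Estar P μ (fun m ω => (ω 0 ^ 2 - ω 1 ^ 2) * ∑ x ∈ Λ, tau (-x) (G x) m ω))
    ∧ ∀ g : (ℤ → ℝ) → (ℤ → ℝ) → ℝ, (∃ t : Finset ℤ, CylOn g t) →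
        MemLp (fun p : (ℤ → ℝ) × (ℤ → ℝ) => g p.1 p.2) 2 (P.prod μ) →
        ∑' z : ℤ, Estar P μ (fun m ω => φ m ω * tau z g m ω)
          = Estar P μ (fun m ω =>
              grad0Gamma g m ω * ∑ x ∈ Λ, tau (-x) (F x) m ω
                + grad01Gamma g m ω * ∑ x ∈ Λ, tau (-x) (G x) m ω) := by
  classical
  subst hφ
  set v : ℝ≥0 := Real.toNNReal β⁻¹ with hvdef
  have hvne : v ≠ 0 := by
    simp only [hvdef, ne_eq, Real.toNNReal_eq_zero, not_le]
    positivity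
  have hrefl : P.map ⇑(MeasurableEquiv.refl (ℤ → ℝ)) = P := by
    rw [show ⇑(MeasurableEquiv.refl (ℤ → ℝ)) = id from rfl, Measure.map_id]
  have hflip : ∀ x : ℤ, μ.map (flipAt x) = μ := fun x =>
    map_flip_eq (gauss_neg v) hμ x
  have hpμ : ∀ e : ℤ ≃ ℤ, μ.map ⇑(precompE e) = μ := map_precomp_eq hμ
  have hpP : ∀ e : ℤ ≃ ℤ, P.map ⇑(precompE e) = P := map_precomp_eq hP
  have covF : ∀ (x : ℤ) (f : (ℤ → ℝ) → (ℤ → ℝ) → ℝ),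
      Estar P μ (fun m ω => f m (flipAt x ω)) = Estar P μ f := fun x f =>
    estar_comp (MeasurableEquiv.refl _) (flipE x) hrefl (hflip x) f
  have covE : ∀ (x : ℤ) (f : (ℤ → ℝ) → (ℤ → ℝ) → ℝ),
      Estar P μ (fun m ω => f m (exchAt x ω)) = Estar P μ f := fun x f => by
    have h := estar_comp (MeasurableEquiv.refl _) (precompE (swapE x)) hrefl (hpμ _) f
    have he : (fun (m ω : ℤ → ℝ) => f m (exchAt x ω))
        = (fun (m ω : ℤ → ℝ) => f m ((precompE (swapE x)) ω)) := by
      rw [exchAt_eq]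
    rw [he]
    exact h
  have covT : ∀ (x : ℤ) (f : (ℤ → ℝ) → (ℤ → ℝ) → ℝ),
      Estar P μ (fun m ω => f ((precompE (shiftE x)) m) ((precompE (shiftE x)) ω))
        = Estar P μ f := fun x f =>
    estar_comp (precompE (shiftE x)) (precompE (shiftE x)) (hpP _) (hpμ _) f
  have hω2 : ∀ y : ℤ, MemLp (fun p : (ℤ → ℝ) × (ℤ → ℝ) => p.2 y ^ 2) 2 (P.prod μ) :=
    fun y => coord_sq_memL2 hvne hμ y
  have hω2sub : MemLp (fun p : (ℤ → ℝ) × (ℤ → ℝ) => p.2 0 ^ 2 - p.2 1 ^ 2) 2 (P.prod μ) :=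
    (hω2 0).sub (hω2 1)
  have hL2Ff : ∀ x ∈ Λ,
      MemLp (fun p : (ℤ → ℝ) × (ℤ → ℝ) => F x p.1 (flipAt x p.2)) 2 (P.prod μ) :=
    fun x hx => memL2_comp (MeasurableEquiv.refl _) (flipE x) hrefl (hflip x) (hF2 x hx)
  have hL2Ge : ∀ x ∈ Λ,
      MemLp (fun p : (ℤ → ℝ) × (ℤ → ℝ) => G x p.1 (exchAt x p.2)) 2 (P.prod μ) := by
    intro x hx
    have h := memL2_comp (MeasurableEquiv.refl _) (precompE (swapE x)) hrefl (hpμ _) (hG2 x hx)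
    have he : (fun p : (ℤ → ℝ) × (ℤ → ℝ) => G x p.1 (exchAt x p.2))
        = (fun p : (ℤ → ℝ) × (ℤ → ℝ) => G x p.1 ((precompE (swapE x)) p.2)) := by
      rw [exchAt_eq]
    rw [he]
    exact h
  have hL2tau : ∀ (z : ℤ) (g : (ℤ → ℝ) → (ℤ → ℝ) → ℝ),
      MemLp (fun p : (ℤ → ℝ) × (ℤ → ℝ) => g p.1 p.2) 2 (P.prod μ) →
      MemLp (fun p : (ℤ → ℝ) × (ℤ → ℝ) => tau z g p.1 p.2) 2 (P.prod μ) := fun z g hg =>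
    memL2_comp (precompE (shiftE z)) (precompE (shiftE z)) (hpP _) (hpμ _) hg
  have hL2tG : ∀ x ∈ Λ,
      MemLp (fun p : (ℤ → ℝ) × (ℤ → ℝ) => tau (-x) (G x) p.1 p.2) 2 (P.prod μ) :=
    fun x hx => hL2tau (-x) (G x) (hG2 x hx)
  have hL2tF : ∀ x ∈ Λ,
      MemLp (fun p : (ℤ → ℝ) × (ℤ → ℝ) => tau (-x) (F x) p.1 p.2) 2 (P.prod μ) :=
    fun x hx => hL2tau (-x) (F x) (hF2 x hx)
  constructor
  · -- part (i)
    have intF : ∀ x ∈ Λ, ∀ y : ℤ, Integrable (fun p : (ℤ → ℝ) × (ℤ → ℝ) =>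
        (F x p.1 (flipAt x p.2) - F x p.1 p.2) * p.2 y ^ 2) (P.prod μ) := by
      intro x hx y
      refine ((int_mul (hL2Ff x hx) (hω2 y)).sub (int_mul (hF2 x hx) (hω2 y))).congr
        (ae_of_all _ fun p => ?_)
      simp only [Pi.sub_apply]
      ring
    have intG : ∀ x ∈ Λ, ∀ y : ℤ, Integrable (fun p : (ℤ → ℝ) × (ℤ → ℝ) =>
        (G x p.1 (exchAt x p.2) - G x p.1 p.2) * p.2 y ^ 2) (P.prod μ) := by
      intro x hx y
      refine ((int_mul (hL2Ge x hx) (hω2 y)).sub (int_mul (hG2 x hx) (hω2 y))).congr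
        (ae_of_all _ fun p => ?_)
      simp only [Pi.sub_apply]
      ring
    have hFzero : ∀ x ∈ Λ, ∀ y : ℤ,
        Estar P μ (fun m ω => (F x m (flipAt x ω) - F x m ω) * ω y ^ 2) = 0 := by
      intro x hx y
      have hinv : ∀ ω : ℤ → ℝ, flipAt x ω y ^ 2 = ω y ^ 2 := fun ω => by
        by_cases h : y = x
        · subst h; rw [flipAt_apply, if_pos rfl]; ring
        · rw [flipAt_apply, if_neg h]
      have hcov := covF x (fun m ω => (F x m (flipAt x ω) - F x m ω) * ω y ^ 2)
      have heq : (fun (m ω : ℤ → ℝ) =>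
            (F x m (flipAt x (flipAt x ω)) - F x m (flipAt x ω)) * flipAt x ω y ^ 2)
          = fun (m ω : ℤ → ℝ) => -((F x m (flipAt x ω) - F x m ω) * ω y ^ 2) := by
        funext m ω
        rw [flipAt_flipAt, hinv]
        ring
      have h2 : Estar P μ (fun m ω => -((F x m (flipAt x ω) - F x m ω) * ω y ^ 2))
          = Estar P μ (fun m ω => (F x m (flipAt x ω) - F x m ω) * ω y ^ 2) := by
        rw [← heq]
        exact hcov
      rw [estar_neg] at h2
      linarith
    have hGzero : ∀ x ∈ Λ, ∀ y : ℤ, y ≠ x → y ≠ x + 1 →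
        Estar P μ (fun m ω => (G x m (exchAt x ω) - G x m ω) * ω y ^ 2) = 0 := by
      intro x hx y hy1 hy2
      have hcov := covE x (fun m ω => (G x m (exchAt x ω) - G x m ω) * ω y ^ 2)
      have heq : (fun (m ω : ℤ → ℝ) =>
            (G x m (exchAt x (exchAt x ω)) - G x m (exchAt x ω)) * exchAt x ω y ^ 2)
          = fun (m ω : ℤ → ℝ) => -((G x m (exchAt x ω) - G x m ω) * ω y ^ 2) := by
        funext m ω
        rw [exchAt_exchAt, exchAt_other x ω y hy1 hy2]
        ring
      have h2 : Estar P μ (fun m ω => -((G x m (exchAt x ω) - G x m ω) * ω y ^ 2))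
          = Estar P μ (fun m ω => (G x m (exchAt x ω) - G x m ω) * ω y ^ 2) := by
        rw [← heq]
        exact hcov
      rw [estar_neg] at h2
      linarith
    have hGflipsign : ∀ x ∈ Λ,
        Estar P μ (fun m ω => (G x m (exchAt x ω) - G x m ω) * ω x ^ 2)
        = - Estar P μ (fun m ω => (G x m (exchAt x ω) - G x m ω) * ω (x + 1) ^ 2) := by
      intro x hx
      have hcov := covE x (fun m ω => (G x m (exchAt x ω) - G x m ω) * ω x ^ 2)
      have heq : (fun (m ω : ℤ → ℝ) =>
            (G x m (exchAt x (exchAt x ω)) - G x m (exchAt x ω)) * exchAt x ω x ^ 2)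
          = fun (m ω : ℤ → ℝ) => -((G x m (exchAt x ω) - G x m ω) * ω (x + 1) ^ 2) := by
        funext m ω
        rw [exchAt_exchAt, exchAt_self]
        ring
      have h2 : Estar P μ (fun m ω => -((G x m (exchAt x ω) - G x m ω) * ω (x + 1) ^ 2))
          = Estar P μ (fun m ω => (G x m (exchAt x ω) - G x m ω) * ω x ^ 2) := by
        rw [← heq]
        exact hcov
      rw [estar_neg] at h2
      linarith
    have hGmain : ∀ x ∈ Λ,
        Estar P μ (fun m ω => (G x m (exchAt x ω) - G x m ω) * ω (x + 1) ^ 2)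
        = Estar P μ (fun m ω => tau (-x) (G x) m ω * (ω 0 ^ 2 - ω 1 ^ 2)) := by
      intro x hx
      -- step 1 : E[G(exch)·ω_{x+1}²] = E[G·ω_x²]
      have hcov := covE x (fun m ω => G x m ω * ω x ^ 2)
      have heq : (fun (m ω : ℤ → ℝ) => G x m (exchAt x ω) * exchAt x ω x ^ 2)
          = fun (m ω : ℤ → ℝ) => G x m (exchAt x ω) * ω (x + 1) ^ 2 := by
        funext m ω
        rw [exchAt_self]
      have h1 : Estar P μ (fun m ω => G x m (exchAt x ω) * ω (x + 1) ^ 2)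
          = Estar P μ (fun m ω => G x m ω * ω x ^ 2) := by
        rw [← heq]
        exact hcov
      -- step 2 : split
      have hsplit : Estar P μ (fun m ω => (G x m (exchAt x ω) - G x m ω) * ω (x + 1) ^ 2)
          = Estar P μ (fun m ω => G x m (exchAt x ω) * ω (x + 1) ^ 2)
            - Estar P μ (fun m ω => G x m ω * ω (x + 1) ^ 2) := by
        have hrw : (fun (m ω : ℤ → ℝ) => (G x m (exchAt x ω) - G x m ω) * ω (x + 1) ^ 2)
            = fun (m ω : ℤ → ℝ) =>
                G x m (exchAt x ω) * ω (x + 1) ^ 2 - G x m ω * ω (x + 1) ^ 2 := by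
          funext m ω; ring
        rw [hrw]
        exact estar_sub (int_mul (hL2Ge x hx) (hω2 (x + 1))) (int_mul (hG2 x hx) (hω2 (x + 1)))
      have hcomb : Estar P μ (fun m ω => (G x m (exchAt x ω) - G x m ω) * ω (x + 1) ^ 2)
          = Estar P μ (fun m ω => G x m ω * (ω x ^ 2 - ω (x + 1) ^ 2)) := by
        rw [hsplit, h1]
        have hrw : (fun (m ω : ℤ → ℝ) => G x m ω * (ω x ^ 2 - ω (x + 1) ^ 2))
            = fun (m ω : ℤ → ℝ) => G x m ω * ω x ^ 2 - G x m ω * ω (x + 1) ^ 2 := by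
          funext m ω; ring
        rw [hrw, estar_sub (int_mul (hG2 x hx) (hω2 x)) (int_mul (hG2 x hx) (hω2 (x + 1)))]
      -- step 3 : translation
      have hcov2 := covT x (fun m ω => tau (-x) (G x) m ω * (ω 0 ^ 2 - ω 1 ^ 2))
      have heq2 : (fun (m ω : ℤ → ℝ) =>
            tau (-x) (G x) ((precompE (shiftE x)) m) ((precompE (shiftE x)) ω)
              * (((precompE (shiftE x)) ω) 0 ^ 2 - ((precompE (shiftE x)) ω) 1 ^ 2))
          = fun (m ω : ℤ → ℝ) => G x m ω * (ω x ^ 2 - ω (x + 1) ^ 2) := by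
        funext m ω
        have hm : (fun z => m (x + (-x + z))) = m := funext fun z => by
          rw [add_neg_cancel_left]
        have hw : (fun z => ω (x + (-x + z))) = ω := funext fun z => by
          rw [add_neg_cancel_left]
        show G x (fun z => m (x + (-x + z))) (fun z => ω (x + (-x + z)))
            * (ω (x + 0) ^ 2 - ω (x + 1) ^ 2) = G x m ω * (ω x ^ 2 - ω (x + 1) ^ 2)
        rw [hm, hw, add_zero]
      have h3 : Estar P μ (fun m ω => G x m ω * (ω x ^ 2 - ω (x + 1) ^ 2))
          = Estar P μ (fun m ω => tau (-x) (G x) m ω * (ω 0 ^ 2 - ω 1 ^ 2)) := by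
        rw [← heq2]
        exact hcov2
      rw [hcomb, h3]
    -- assembling part (i)
    set S₁ : Finset ℤ := Λ ∪ Λ.image (fun x => x + 1) with hS₁
    have hterm : ∀ y : ℤ, Estar P μ (fun m ω => (∑ x ∈ Λ,
          ((F x m (flipAt x ω) - F x m ω) + (G x m (exchAt x ω) - G x m ω))) * ω y ^ 2)
        = ∑ x ∈ Λ, Estar P μ (fun m ω => (G x m (exchAt x ω) - G x m ω) * ω y ^ 2) := by
      intro y
      have hrw : (fun (m ω : ℤ → ℝ) => (∑ x ∈ Λ,
            ((F x m (flipAt x ω) - F x m ω) + (G x m (exchAt x ω) - G x m ω))) * ω y ^ 2)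
          = fun (m ω : ℤ → ℝ) => ∑ x ∈ Λ,
              ((F x m (flipAt x ω) - F x m ω) * ω y ^ 2
                + (G x m (exchAt x ω) - G x m ω) * ω y ^ 2) := by
        funext m ω
        rw [Finset.sum_mul]
        exact Finset.sum_congr rfl fun x _ => by ring
      rw [hrw, estar_sum Λ _ (fun x hx => ((intF x hx y).add (intG x hx y)))]
      refine Finset.sum_congr rfl fun x hx => ?_
      rw [estar_add (intF x hx y) (intG x hx y), hFzero x hx y, zero_add]
    have hvanish : ∀ y : ℤ, y ∉ S₁ → (y : ℝ) * Estar P μ (fun m ω => (∑ x ∈ Λ,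
          ((F x m (flipAt x ω) - F x m ω) + (G x m (exchAt x ω) - G x m ω))) * ω y ^ 2) = 0 := by
      intro y hy
      rw [hterm y, Finset.sum_eq_zero, mul_zero]
      intro x hx
      refine hGzero x hx y (fun h => hy ?_) (fun h => hy ?_)
      · rw [hS₁, h]; exact Finset.mem_union_left _ hx
      · rw [hS₁, h]; exact Finset.mem_union_right _ (Finset.mem_image.mpr ⟨x, hx, rfl⟩)
    rw [tsum_eq_sum (s := S₁) hvanish]
    have hswap : ∑ y ∈ S₁, (y : ℝ) * Estar P μ (fun m ω => (∑ x ∈ Λ,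
          ((F x m (flipAt x ω) - F x m ω) + (G x m (exchAt x ω) - G x m ω))) * ω y ^ 2)
        = ∑ x ∈ Λ, ∑ y ∈ S₁,
            (y : ℝ) * Estar P μ (fun m ω => (G x m (exchAt x ω) - G x m ω) * ω y ^ 2) := by
      rw [show (∑ y ∈ S₁, (y : ℝ) * Estar P μ (fun m ω => (∑ x ∈ Λ,
          ((F x m (flipAt x ω) - F x m ω) + (G x m (exchAt x ω) - G x m ω))) * ω y ^ 2))
          = ∑ y ∈ S₁, ∑ x ∈ Λ, (y : ℝ)
              * Estar P μ (fun m ω => (G x m (exchAt x ω) - G x m ω) * ω y ^ 2) from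
        Finset.sum_congr rfl fun y _ => by rw [hterm y, Finset.mul_sum]]
      exact Finset.sum_comm
    rw [hswap]
    have hinner : ∀ x ∈ Λ, ∑ y ∈ S₁,
        (y : ℝ) * Estar P μ (fun m ω => (G x m (exchAt x ω) - G x m ω) * ω y ^ 2)
        = Estar P μ (fun m ω => tau (-x) (G x) m ω * (ω 0 ^ 2 - ω 1 ^ 2)) := by
      intro x hx
      have hsub : ({x, x + 1} : Finset ℤ) ⊆ S₁ := by
        intro z hz
        rcases Finset.mem_insert.mp hz with h | h
        · rw [hS₁, h]; exact Finset.mem_union_left _ hx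
        · rw [hS₁, Finset.mem_singleton.mp h]
          exact Finset.mem_union_right _ (Finset.mem_image.mpr ⟨x, hx, rfl⟩)
      rw [← Finset.sum_subset hsub (fun y _ hy => ?_)]
      · rw [Finset.sum_pair (by omega : x ≠ x + 1), hGflipsign x hx]
        have := hGmain x hx
        push_cast
        linarith [hGmain x hx]
      · rw [hGzero x hx y (fun h => hy (by rw [h]; exact Finset.mem_insert_self _ _))
          (fun h => hy (by rw [h]; exact Finset.mem_insert.mpr (Or.inr
            (Finset.mem_singleton_self _)))), mul_zero]
    rw [Finset.sum_congr rfl hinner]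
    have hfinal : Estar P μ (fun m ω => (ω 0 ^ 2 - ω 1 ^ 2) * ∑ x ∈ Λ, tau (-x) (G x) m ω)
        = ∑ x ∈ Λ, Estar P μ (fun m ω => tau (-x) (G x) m ω * (ω 0 ^ 2 - ω 1 ^ 2)) := by
      have hrw : (fun (m ω : ℤ → ℝ) => (ω 0 ^ 2 - ω 1 ^ 2) * ∑ x ∈ Λ, tau (-x) (G x) m ω)
          = fun (m ω : ℤ → ℝ) => ∑ x ∈ Λ, tau (-x) (G x) m ω * (ω 0 ^ 2 - ω 1 ^ 2) := by
        funext m ω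
        rw [Finset.mul_sum]
        exact Finset.sum_congr rfl fun x _ => by ring
      rw [hrw]
      exact estar_sum Λ _ fun x hx => int_mul (hL2tG x hx) hω2sub
    rw [hfinal]
  · rintro g ⟨t, hgt⟩ hg2
    have hcylflip : ∀ z x : ℤ, x - z ∉ t → ∀ (m ω : ℤ → ℝ),
        tau z g m (flipAt x ω) = tau z g m ω := by
      intro z x hxz m ω
      refine hgt _ _ _ _ (fun w _ => rfl) (fun w hw => ?_)
      rw [flipAt_apply, if_neg (fun h => hxz (by rw [show x - z = w by omega]; exact hw))]
    have hcylexch : ∀ z x : ℤ, x - z ∉ t → x + 1 - z ∉ t → ∀ (m ω : ℤ → ℝ),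
        tau z g m (exchAt x ω) = tau z g m ω := by
      intro z x h1 h2 m ω
      refine hgt _ _ _ _ (fun w _ => rfl) (fun w hw => ?_)
      exact exchAt_other x ω (z + w)
        (fun h => h1 (by rw [show x - z = w by omega]; exact hw))
        (fun h => h2 (by rw [show x + 1 - z = w by omega]; exact hw))
    set W0 : Finset ℤ := t.image (fun i => -i) with hW0def
    set W1 : Finset ℤ := t.image (fun i => 1 - i) with hW1def
    have hnW0 : ∀ w : ℤ, w ∉ W0 → -w ∉ t := by
      intro w hw hmem
      exact hw (Finset.mem_image.mpr ⟨-w, hmem, by omega⟩)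
    have hnW1 : ∀ w : ℤ, w ∉ W1 → 1 - w ∉ t := by
      intro w hw hmem
      exact hw (Finset.mem_image.mpr ⟨1 - w, hmem, by omega⟩)
    have hgrad0 : ∀ (m ω : ℤ → ℝ), grad0Gamma g m ω
        = ∑ w ∈ W0, (tau w g m (flipAt 0 ω) - tau w g m ω) := by
      intro m ω
      refine tsum_eq_sum fun w hw => ?_
      rw [hcylflip w 0 (by rw [zero_sub]; exact hnW0 w hw) m ω, sub_self]
    have hgrad01 : ∀ (m ω : ℤ → ℝ), grad01Gamma g m ω
        = ∑ w ∈ W0 ∪ W1, (tau w g m (exchAt 0 ω) - tau w g m ω) := by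
      intro m ω
      refine tsum_eq_sum fun w hw => ?_
      rw [hcylexch w 0 (by rw [zero_sub]; exact hnW0 w (fun h => hw (Finset.mem_union_left _ h)))
        (by rw [show (0:ℤ) + 1 - w = 1 - w by omega]
            exact hnW1 w (fun h => hw (Finset.mem_union_right _ h))) m ω, sub_self]
    have hL2g : ∀ z : ℤ, MemLp (fun p : (ℤ → ℝ) × (ℤ → ℝ) => tau z g p.1 p.2) 2 (P.prod μ) :=
      fun z => hL2tau z g hg2
    have hL2gf : ∀ z : ℤ,
        MemLp (fun p : (ℤ → ℝ) × (ℤ → ℝ) => tau z g p.1 (flipAt 0 p.2)) 2 (P.prod μ) :=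
      fun z => memL2_comp (MeasurableEquiv.refl _) (flipE 0) hrefl (hflip 0) (hL2g z)
    have hL2ge : ∀ z : ℤ,
        MemLp (fun p : (ℤ → ℝ) × (ℤ → ℝ) => tau z g p.1 (exchAt 0 p.2)) 2 (P.prod μ) := by
      intro z
      have h := memL2_comp (MeasurableEquiv.refl _) (precompE (swapE 0)) hrefl (hpμ _) (hL2g z)
      have he : (fun p : (ℤ → ℝ) × (ℤ → ℝ) => tau z g p.1 (exchAt 0 p.2))
          = fun p : (ℤ → ℝ) × (ℤ → ℝ) => tau z g p.1 ((precompE (swapE 0)) p.2) := by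
        rw [exchAt_eq]
      rw [he]; exact h
    have hL2gfx : ∀ z x : ℤ,
        MemLp (fun p : (ℤ → ℝ) × (ℤ → ℝ) => tau z g p.1 (flipAt x p.2)) 2 (P.prod μ) :=
      fun z x => memL2_comp (MeasurableEquiv.refl _) (flipE x) hrefl (hflip x) (hL2g z)
    have hL2gex : ∀ z x : ℤ,
        MemLp (fun p : (ℤ → ℝ) × (ℤ → ℝ) => tau z g p.1 (exchAt x p.2)) 2 (P.prod μ) := by
      intro z x
      have h := memL2_comp (MeasurableEquiv.refl _) (precompE (swapE x)) hrefl (hpμ _) (hL2g z)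
      have he : (fun p : (ℤ → ℝ) × (ℤ → ℝ) => tau z g p.1 (exchAt x p.2))
          = fun p : (ℤ → ℝ) × (ℤ → ℝ) => tau z g p.1 ((precompE (swapE x)) p.2) := by
        rw [exchAt_eq]
      rw [he]; exact h
    have hshift_tau : ∀ (x w : ℤ) (h : (ℤ → ℝ) → (ℤ → ℝ) → ℝ) (m ω : ℤ → ℝ),
        tau w h ((precompE (shiftE x)) m) ((precompE (shiftE x)) ω) = tau (x + w) h m ω := by
      intro x w h m ω
      show h (fun u => m (x + (w + u))) (fun u => ω (x + (w + u)))
          = h (fun u => m (x + w + u)) (fun u => ω (x + w + u))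
      have hm : (fun u => m (x + (w + u))) = fun u => m (x + w + u) :=
        funext fun u => by rw [add_assoc]
      have hw2 : (fun u => ω (x + (w + u))) = fun u => ω (x + w + u) :=
        funext fun u => by rw [add_assoc]
      rw [hm, hw2]
    have hshift_flip : ∀ (x : ℤ) (ω : ℤ → ℝ),
        flipAt 0 ((precompE (shiftE x)) ω) = (precompE (shiftE x)) (flipAt x ω) := by
      intro x ω
      funext w
      have l1 : flipAt 0 ((precompE (shiftE x)) ω) w
          = if w = 0 then -(((precompE (shiftE x)) ω) 0) else ((precompE (shiftE x)) ω) w :=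
        flipAt_apply _ _ _
      have l3 : ((precompE (shiftE x)) (flipAt x ω)) w
          = if x + w = x then -(ω x) else ω (x + w) := flipAt_apply _ _ _
      rw [l1, l3]
      by_cases h : w = 0
      · rw [if_pos h, if_pos (by omega)]
        subst h
        show -(ω (x + 0)) = -(ω x)
        rw [add_zero]
      · rw [if_neg h, if_neg (by omega)]
        rfl
    have hshift_exch : ∀ (x : ℤ) (ω : ℤ → ℝ),
        exchAt 0 ((precompE (shiftE x)) ω) = (precompE (shiftE x)) (exchAt x ω) := by
      intro x ω
      funext w
      show (if w = 0 then ω (x + (0 + 1)) else if w = 0 + 1 then ω (x + 0) else ω (x + w))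
          = (if x + w = x then ω (x + 1) else if x + w = x + 1 then ω x else ω (x + w))
      by_cases h : w = 0
      · rw [if_pos h, if_pos (by omega), show x + (0 + 1) = x + 1 by omega]
      · rw [if_neg h, if_neg (show ¬ x + w = x by omega)]
        by_cases h1 : w = 0 + 1
        · rw [if_pos h1, if_pos (by omega), show x + 0 = x by omega]
        · rw [if_neg h1, if_neg (show ¬ x + w = x + 1 by omega)]
    have hA1 : ∀ x ∈ Λ, ∀ z : ℤ,
        Estar P μ (fun m ω => (F x m (flipAt x ω) - F x m ω) * tau z g m ω)
        = Estar P μ (fun m ω =>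
            tau (-x) (F x) m ω * (tau (z - x) g m (flipAt 0 ω) - tau (z - x) g m ω)) := by
      intro x hx z
      have hcov := covF x (fun m ω => F x m ω * tau z g m (flipAt x ω))
      have heq : (fun (m ω : ℤ → ℝ) =>
            F x m (flipAt x ω) * tau z g m (flipAt x (flipAt x ω)))
          = fun (m ω : ℤ → ℝ) => F x m (flipAt x ω) * tau z g m ω := by
        funext m ω
        rw [flipAt_flipAt]
      have hcross : Estar P μ (fun m ω => F x m (flipAt x ω) * tau z g m ω)
          = Estar P μ (fun m ω => F x m ω * tau z g m (flipAt x ω)) := by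
        rw [← heq]
        exact hcov
      have lhs_split : Estar P μ (fun m ω => (F x m (flipAt x ω) - F x m ω) * tau z g m ω)
          = Estar P μ (fun m ω => F x m (flipAt x ω) * tau z g m ω)
            - Estar P μ (fun m ω => F x m ω * tau z g m ω) := by
        have hrw : (fun (m ω : ℤ → ℝ) => (F x m (flipAt x ω) - F x m ω) * tau z g m ω)
            = fun (m ω : ℤ → ℝ) =>
                F x m (flipAt x ω) * tau z g m ω - F x m ω * tau z g m ω := by
          funext m ω; ring
        rw [hrw]
        exact estar_sub (int_mul (hL2Ff x hx) (hL2g z)) (int_mul (hF2 x hx) (hL2g z))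
      have mid_split : Estar P μ (fun m ω =>
            F x m ω * (tau z g m (flipAt x ω) - tau z g m ω))
          = Estar P μ (fun m ω => F x m ω * tau z g m (flipAt x ω))
            - Estar P μ (fun m ω => F x m ω * tau z g m ω) := by
        have hrw : (fun (m ω : ℤ → ℝ) => F x m ω * (tau z g m (flipAt x ω) - tau z g m ω))
            = fun (m ω : ℤ → ℝ) =>
                F x m ω * tau z g m (flipAt x ω) - F x m ω * tau z g m ω := by
          funext m ω; ring
        rw [hrw]
        exact estar_sub (int_mul (hF2 x hx) (hL2gfx z x)) (int_mul (hF2 x hx) (hL2g z))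
      have hcov2 := covT x (fun m ω =>
        tau (-x) (F x) m ω * (tau (z - x) g m (flipAt 0 ω) - tau (z - x) g m ω))
      have heq2 : (fun (m ω : ℤ → ℝ) =>
            tau (-x) (F x) ((precompE (shiftE x)) m) ((precompE (shiftE x)) ω)
              * (tau (z - x) g ((precompE (shiftE x)) m) (flipAt 0 ((precompE (shiftE x)) ω))
                - tau (z - x) g ((precompE (shiftE x)) m) ((precompE (shiftE x)) ω)))
          = fun (m ω : ℤ → ℝ) => F x m ω * (tau z g m (flipAt x ω) - tau z g m ω) := by
        funext m ω
        have hI1 : tau (-x) (F x) ((precompE (shiftE x)) m) ((precompE (shiftE x)) ω)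
            = F x m ω := by
          show F x (fun u => m (x + (-x + u))) (fun u => ω (x + (-x + u))) = F x m ω
          have hm : (fun u => m (x + (-x + u))) = m := funext fun u => by
            rw [add_neg_cancel_left]
          have hw : (fun u => ω (x + (-x + u))) = ω := funext fun u => by
            rw [add_neg_cancel_left]
          rw [hm, hw]
        rw [hI1, hshift_flip, hshift_tau, hshift_tau, show x + (z - x) = z by omega]
      have h3 : Estar P μ (fun m ω => F x m ω * (tau z g m (flipAt x ω) - tau z g m ω))
          = Estar P μ (fun m ω =>
              tau (-x) (F x) m ω * (tau (z - x) g m (flipAt 0 ω) - tau (z - x) g m ω)) := by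
        rw [← heq2]
        exact hcov2
      rw [lhs_split, ← h3, mid_split, hcross]
    have hB1 : ∀ x ∈ Λ, ∀ z : ℤ,
        Estar P μ (fun m ω => (G x m (exchAt x ω) - G x m ω) * tau z g m ω)
        = Estar P μ (fun m ω =>
            tau (-x) (G x) m ω * (tau (z - x) g m (exchAt 0 ω) - tau (z - x) g m ω)) := by
      intro x hx z
      have hcov := covE x (fun m ω => G x m ω * tau z g m (exchAt x ω))
      have heq : (fun (m ω : ℤ → ℝ) =>
            G x m (exchAt x ω) * tau z g m (exchAt x (exchAt x ω)))
          = fun (m ω : ℤ → ℝ) => G x m (exchAt x ω) * tau z g m ω := by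
        funext m ω
        rw [exchAt_exchAt]
      have hcross : Estar P μ (fun m ω => G x m (exchAt x ω) * tau z g m ω)
          = Estar P μ (fun m ω => G x m ω * tau z g m (exchAt x ω)) := by
        rw [← heq]
        exact hcov
      have lhs_split : Estar P μ (fun m ω => (G x m (exchAt x ω) - G x m ω) * tau z g m ω)
          = Estar P μ (fun m ω => G x m (exchAt x ω) * tau z g m ω)
            - Estar P μ (fun m ω => G x m ω * tau z g m ω) := by
        have hrw : (fun (m ω : ℤ → ℝ) => (G x m (exchAt x ω) - G x m ω) * tau z g m ω)
            = fun (m ω : ℤ → ℝ) =>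
                G x m (exchAt x ω) * tau z g m ω - G x m ω * tau z g m ω := by
          funext m ω; ring
        rw [hrw]
        exact estar_sub (int_mul (hL2Ge x hx) (hL2g z)) (int_mul (hG2 x hx) (hL2g z))
      have mid_split : Estar P μ (fun m ω =>
            G x m ω * (tau z g m (exchAt x ω) - tau z g m ω))
          = Estar P μ (fun m ω => G x m ω * tau z g m (exchAt x ω))
            - Estar P μ (fun m ω => G x m ω * tau z g m ω) := by
        have hrw : (fun (m ω : ℤ → ℝ) => G x m ω * (tau z g m (exchAt x ω) - tau z g m ω))
            = fun (m ω : ℤ → ℝ) =>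
                G x m ω * tau z g m (exchAt x ω) - G x m ω * tau z g m ω := by
          funext m ω; ring
        rw [hrw]
        exact estar_sub (int_mul (hG2 x hx) (hL2gex z x)) (int_mul (hG2 x hx) (hL2g z))
      have hcov2 := covT x (fun m ω =>
        tau (-x) (G x) m ω * (tau (z - x) g m (exchAt 0 ω) - tau (z - x) g m ω))
      have heq2 : (fun (m ω : ℤ → ℝ) =>
            tau (-x) (G x) ((precompE (shiftE x)) m) ((precompE (shiftE x)) ω)
              * (tau (z - x) g ((precompE (shiftE x)) m) (exchAt 0 ((precompE (shiftE x)) ω))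
                - tau (z - x) g ((precompE (shiftE x)) m) ((precompE (shiftE x)) ω)))
          = fun (m ω : ℤ → ℝ) => G x m ω * (tau z g m (exchAt x ω) - tau z g m ω) := by
        funext m ω
        have hI1 : tau (-x) (G x) ((precompE (shiftE x)) m) ((precompE (shiftE x)) ω)
            = G x m ω := by
          show G x (fun u => m (x + (-x + u))) (fun u => ω (x + (-x + u))) = G x m ω
          have hm : (fun u => m (x + (-x + u))) = m := funext fun u => by
            rw [add_neg_cancel_left]
          have hw : (fun u => ω (x + (-x + u))) = ω := funext fun u => by
            rw [add_neg_cancel_left]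
          rw [hm, hw]
        rw [hI1, hshift_exch, hshift_tau, hshift_tau, show x + (z - x) = z by omega]
      have h3 : Estar P μ (fun m ω => G x m ω * (tau z g m (exchAt x ω) - tau z g m ω))
          = Estar P μ (fun m ω =>
              tau (-x) (G x) m ω * (tau (z - x) g m (exchAt 0 ω) - tau (z - x) g m ω)) := by
        rw [← heq2]
        exact hcov2
      rw [lhs_split, ← h3, mid_split, hcross]
    have hA'zero : ∀ x w : ℤ, w ∉ W0 →
        Estar P μ (fun m ω =>
          tau (-x) (F x) m ω * (tau w g m (flipAt 0 ω) - tau w g m ω)) = 0 := by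
      intro x w hw
      have hrw : (fun (m ω : ℤ → ℝ) =>
            tau (-x) (F x) m ω * (tau w g m (flipAt 0 ω) - tau w g m ω))
          = fun (_ _ : ℤ → ℝ) => (0:ℝ) := by
        funext m ω
        rw [hcylflip w 0 (by rw [zero_sub]; exact hnW0 w hw) m ω, sub_self, mul_zero]
      rw [hrw]
      exact estar_zero P μ
    have hB'zero : ∀ x w : ℤ, w ∉ W0 ∪ W1 →
        Estar P μ (fun m ω =>
          tau (-x) (G x) m ω * (tau w g m (exchAt 0 ω) - tau w g m ω)) = 0 := by
      intro x w hw
      have hrw : (fun (m ω : ℤ → ℝ) =>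
            tau (-x) (G x) m ω * (tau w g m (exchAt 0 ω) - tau w g m ω))
          = fun (_ _ : ℤ → ℝ) => (0:ℝ) := by
        funext m ω
        rw [hcylexch w 0
          (by rw [zero_sub]; exact hnW0 w (fun h => hw (Finset.mem_union_left _ h)))
          (by rw [show (0:ℤ) + 1 - w = 1 - w by omega]
              exact hnW1 w (fun h => hw (Finset.mem_union_right _ h))) m ω,
          sub_self, mul_zero]
      rw [hrw]
      exact estar_zero P μ
    have intA : ∀ x ∈ Λ, ∀ z : ℤ, Integrable (fun p : (ℤ → ℝ) × (ℤ → ℝ) =>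
        (F x p.1 (flipAt x p.2) - F x p.1 p.2) * tau z g p.1 p.2) (P.prod μ) := by
      intro x hx z
      refine ((int_mul (hL2Ff x hx) (hL2g z)).sub (int_mul (hF2 x hx) (hL2g z))).congr
        (ae_of_all _ fun p => ?_)
      simp only [Pi.sub_apply]
      ring
    have intB : ∀ x ∈ Λ, ∀ z : ℤ, Integrable (fun p : (ℤ → ℝ) × (ℤ → ℝ) =>
        (G x p.1 (exchAt x p.2) - G x p.1 p.2) * tau z g p.1 p.2) (P.prod μ) := by
      intro x hx z
      refine ((int_mul (hL2Ge x hx) (hL2g z)).sub (int_mul (hG2 x hx) (hL2g z))).congr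
        (ae_of_all _ fun p => ?_)
      simp only [Pi.sub_apply]
      ring
    have intA' : ∀ x ∈ Λ, ∀ w : ℤ, Integrable (fun p : (ℤ → ℝ) × (ℤ → ℝ) =>
        tau (-x) (F x) p.1 p.2 * (tau w g p.1 (flipAt 0 p.2) - tau w g p.1 p.2)) (P.prod μ) := by
      intro x hx w
      refine ((int_mul (hL2tF x hx) (hL2gf w)).sub (int_mul (hL2tF x hx) (hL2g w))).congr
        (ae_of_all _ fun p => ?_)
      simp only [Pi.sub_apply]
      ring
    have intB' : ∀ x ∈ Λ, ∀ w : ℤ, Integrable (fun p : (ℤ → ℝ) × (ℤ → ℝ) =>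
        tau (-x) (G x) p.1 p.2 * (tau w g p.1 (exchAt 0 p.2) - tau w g p.1 p.2)) (P.prod μ) := by
      intro x hx w
      refine ((int_mul (hL2tG x hx) (hL2ge w)).sub (int_mul (hL2tG x hx) (hL2g w))).congr
        (ae_of_all _ fun p => ?_)
      simp only [Pi.sub_apply]
      ring
    set SS : Finset ℤ := Λ.biUnion (fun x => (W0 ∪ W1).image (fun w => w + x)) with hSS
    have hterm2 : ∀ z : ℤ, Estar P μ (fun m ω => (∑ x ∈ Λ,
          ((F x m (flipAt x ω) - F x m ω) + (G x m (exchAt x ω) - G x m ω))) * tau z g m ω)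
        = ∑ x ∈ Λ,
            (Estar P μ (fun m ω => (F x m (flipAt x ω) - F x m ω) * tau z g m ω)
              + Estar P μ (fun m ω => (G x m (exchAt x ω) - G x m ω) * tau z g m ω)) := by
      intro z
      have hrw : (fun (m ω : ℤ → ℝ) => (∑ x ∈ Λ,
            ((F x m (flipAt x ω) - F x m ω) + (G x m (exchAt x ω) - G x m ω))) * tau z g m ω)
          = fun (m ω : ℤ → ℝ) => ∑ x ∈ Λ,
              ((F x m (flipAt x ω) - F x m ω) * tau z g m ω
                + (G x m (exchAt x ω) - G x m ω) * tau z g m ω) := by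
        funext m ω
        rw [Finset.sum_mul]
        exact Finset.sum_congr rfl fun x _ => by ring
      rw [hrw, estar_sum Λ _ (fun x hx => (intA x hx z).add (intB x hx z))]
      exact Finset.sum_congr rfl fun x hx => estar_add (intA x hx z) (intB x hx z)
    have hvanish2 : ∀ z : ℤ, z ∉ SS → Estar P μ (fun m ω => (∑ x ∈ Λ,
          ((F x m (flipAt x ω) - F x m ω) + (G x m (exchAt x ω) - G x m ω)))
            * tau z g m ω) = 0 := by
      intro z hz
      rw [hterm2 z]
      refine Finset.sum_eq_zero fun x hx => ?_
      have hzx : z - x ∉ W0 ∪ W1 := by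
        intro hmem
        refine hz ?_
        rw [hSS]
        exact Finset.mem_biUnion.mpr ⟨x, hx, Finset.mem_image.mpr ⟨z - x, hmem, by omega⟩⟩
      rw [hA1 x hx z, hB1 x hx z,
        hA'zero x (z - x) (fun h => hzx (Finset.mem_union_left _ h)),
        hB'zero x (z - x) hzx, add_zero]
    rw [tsum_eq_sum (s := SS) hvanish2]
    have hAx : ∀ x ∈ Λ, (∑ z ∈ SS,
        Estar P μ (fun m ω => (F x m (flipAt x ω) - F x m ω) * tau z g m ω))
        = Estar P μ (fun m ω => tau (-x) (F x) m ω * grad0Gamma g m ω) := by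
      intro x hx
      rw [Finset.sum_congr rfl (fun z _ => hA1 x hx z)]
      have hinj : ∀ a ∈ SS, ∀ b ∈ SS, a - x = b - x → a = b := fun a _ b _ h => by omega
      have himg : (∑ w ∈ SS.image (fun z => z - x), Estar P μ (fun m ω =>
            tau (-x) (F x) m ω * (tau w g m (flipAt 0 ω) - tau w g m ω)))
          = ∑ z ∈ SS, Estar P μ (fun m ω =>
              tau (-x) (F x) m ω * (tau (z - x) g m (flipAt 0 ω) - tau (z - x) g m ω)) :=
        Finset.sum_image hinj
      rw [← himg]
      have hsubW : W0 ⊆ SS.image (fun z => z - x) := by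
        intro w hw
        refine Finset.mem_image.mpr ⟨w + x, ?_, by omega⟩
        rw [hSS]
        exact Finset.mem_biUnion.mpr
          ⟨x, hx, Finset.mem_image.mpr ⟨w, Finset.mem_union_left _ hw, rfl⟩⟩
      rw [← Finset.sum_subset hsubW (fun w _ hw => hA'zero x w hw)]
      have hrw : (fun (m ω : ℤ → ℝ) => tau (-x) (F x) m ω * grad0Gamma g m ω)
          = fun (m ω : ℤ → ℝ) => ∑ w ∈ W0,
              (tau (-x) (F x) m ω * (tau w g m (flipAt 0 ω) - tau w g m ω)) := by
        funext m ω
        rw [hgrad0 m ω, Finset.mul_sum]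
      rw [hrw, estar_sum W0 _ (fun w _ => intA' x hx w)]
    have hBx : ∀ x ∈ Λ, (∑ z ∈ SS,
        Estar P μ (fun m ω => (G x m (exchAt x ω) - G x m ω) * tau z g m ω))
        = Estar P μ (fun m ω => tau (-x) (G x) m ω * grad01Gamma g m ω) := by
      intro x hx
      rw [Finset.sum_congr rfl (fun z _ => hB1 x hx z)]
      have hinj : ∀ a ∈ SS, ∀ b ∈ SS, a - x = b - x → a = b := fun a _ b _ h => by omega
      have himg : (∑ w ∈ SS.image (fun z => z - x), Estar P μ (fun m ω =>
            tau (-x) (G x) m ω * (tau w g m (exchAt 0 ω) - tau w g m ω)))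
          = ∑ z ∈ SS, Estar P μ (fun m ω =>
              tau (-x) (G x) m ω * (tau (z - x) g m (exchAt 0 ω) - tau (z - x) g m ω)) :=
        Finset.sum_image hinj
      rw [← himg]
      have hsubW : W0 ∪ W1 ⊆ SS.image (fun z => z - x) := by
        intro w hw
        refine Finset.mem_image.mpr ⟨w + x, ?_, by omega⟩
        rw [hSS]
        exact Finset.mem_biUnion.mpr ⟨x, hx, Finset.mem_image.mpr ⟨w, hw, rfl⟩⟩
      rw [← Finset.sum_subset hsubW (fun w _ hw => hB'zero x w hw)]
      have hrw : (fun (m ω : ℤ → ℝ) => tau (-x) (G x) m ω * grad01Gamma g m ω)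
          = fun (m ω : ℤ → ℝ) => ∑ w ∈ W0 ∪ W1,
              (tau (-x) (G x) m ω * (tau w g m (exchAt 0 ω) - tau w g m ω)) := by
        funext m ω
        rw [hgrad01 m ω, Finset.mul_sum]
      rw [hrw, estar_sum (W0 ∪ W1) _ (fun w _ => intB' x hx w)]
    have hsum : (∑ z ∈ SS, Estar P μ (fun m ω => (∑ x ∈ Λ,
          ((F x m (flipAt x ω) - F x m ω) + (G x m (exchAt x ω) - G x m ω))) * tau z g m ω))
        = ∑ x ∈ Λ, (Estar P μ (fun m ω => tau (-x) (F x) m ω * grad0Gamma g m ω)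
            + Estar P μ (fun m ω => tau (-x) (G x) m ω * grad01Gamma g m ω)) := by
      rw [Finset.sum_congr rfl (fun z _ => hterm2 z), Finset.sum_comm]
      refine Finset.sum_congr rfl fun x hx => ?_
      rw [Finset.sum_add_distrib, hAx x hx, hBx x hx]
    rw [hsum]
    have intAg : ∀ x ∈ Λ, Integrable (fun p : (ℤ → ℝ) × (ℤ → ℝ) =>
        tau (-x) (F x) p.1 p.2 * grad0Gamma g p.1 p.2) (P.prod μ) := by
      intro x hx
      have hrw : (fun p : (ℤ → ℝ) × (ℤ → ℝ) =>
            tau (-x) (F x) p.1 p.2 * grad0Gamma g p.1 p.2)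
          = fun p : (ℤ → ℝ) × (ℤ → ℝ) => ∑ w ∈ W0,
              (tau (-x) (F x) p.1 p.2 * (tau w g p.1 (flipAt 0 p.2) - tau w g p.1 p.2)) := by
        funext p
        rw [hgrad0 p.1 p.2, Finset.mul_sum]
      rw [hrw]
      exact integrable_finset_sum _ (fun w _ => intA' x hx w)
    have intBg : ∀ x ∈ Λ, Integrable (fun p : (ℤ → ℝ) × (ℤ → ℝ) =>
        tau (-x) (G x) p.1 p.2 * grad01Gamma g p.1 p.2) (P.prod μ) := by
      intro x hx
      have hrw : (fun p : (ℤ → ℝ) × (ℤ → ℝ) =>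
            tau (-x) (G x) p.1 p.2 * grad01Gamma g p.1 p.2)
          = fun p : (ℤ → ℝ) × (ℤ → ℝ) => ∑ w ∈ W0 ∪ W1,
              (tau (-x) (G x) p.1 p.2 * (tau w g p.1 (exchAt 0 p.2) - tau w g p.1 p.2)) := by
        funext p
        rw [hgrad01 p.1 p.2, Finset.mul_sum]
      rw [hrw]
      exact integrable_finset_sum _ (fun w _ => intB' x hx w)
    have hrhs : Estar P μ (fun m ω => grad0Gamma g m ω * ∑ x ∈ Λ, tau (-x) (F x) m ω
          + grad01Gamma g m ω * ∑ x ∈ Λ, tau (-x) (G x) m ω)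
        = ∑ x ∈ Λ, (Estar P μ (fun m ω => tau (-x) (F x) m ω * grad0Gamma g m ω)
            + Estar P μ (fun m ω => tau (-x) (G x) m ω * grad01Gamma g m ω)) := by
      have hrw : (fun (m ω : ℤ → ℝ) => grad0Gamma g m ω * ∑ x ∈ Λ, tau (-x) (F x) m ω
            + grad01Gamma g m ω * ∑ x ∈ Λ, tau (-x) (G x) m ω)
          = fun (m ω : ℤ → ℝ) => ∑ x ∈ Λ,
              (tau (-x) (F x) m ω * grad0Gamma g m ω
                + tau (-x) (G x) m ω * grad01Gamma g m ω) := by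
        funext m ω
        rw [Finset.mul_sum, Finset.mul_sum, ← Finset.sum_add_distrib]
        exact Finset.sum_congr rfl fun x _ => by ring
      rw [hrw, estar_sum Λ _ (fun x hx => (intAg x hx).add (intBg x hx))]
      exact Finset.sum_congr rfl fun x hx => estar_add (intAg x hx) (intBg x hx)
    rw [hrhs]


end
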